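/- Cycle constraint implies zero angle sum: let n ≥ 1, let θ_1, …, θ_n be real numbers (the angle differences along a cycle with buses k_1, …, k_n, indices taken cyclically so that k_{n+1} = k_1), and let V_1, …, V_n be nonzero real numbers (the voltage magnitudes). Define c_i := V_i · V_{i+1} · cos θ_i, s_i := V_i · V_{i+1} · sin θ_i for i = 1, …, n (cyclically), and d_i := V_i². If ∑_{A ⊆ {1,…,n}, |A| even} (−1)^{|A|/2} · ∏_{h∈A} s_h · ∏_{h∉A} c_h = ∏_{i=1}^n d_i, then ∑_{i=1}^n θ_i ≡ 0 (mod 2π), i.e., there exists an integer m with ∑_{i=1}^n θ_i = 2πm. -/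

import Mathlib

open Finset

lemma I_pow_re (k : ℕ) :
    (Complex.I ^ k).re = if Even k then (-1 : ℝ) ^ (k / 2) else 0 := by
  rcases Nat.even_or_odd k with ⟨m, hm⟩ | ⟨m, hm⟩
  · subst hm
    have h2 : m + m = 2 * m := (two_mul m).symm
    rw [h2, pow_mul, Complex.I_sq]
    have : ((-1 : ℂ) ^ m) = ((((-1 : ℝ)) ^ m : ℝ) : ℂ) := by push_cast; ring
    rw [this, Complex.ofReal_re, if_pos ⟨m, (two_mul m).symm ▸ rfl⟩]
    congr 1
    omega
  · subst hm
    have h0 : Complex.I ^ (2 * m + 1) = ((((-1 : ℝ)) ^ m : ℝ) : ℂ) * Complex.I := by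
      rw [pow_succ, pow_mul, Complex.I_sq]; push_cast; ring
    rw [h0, Complex.mul_I_re, Complex.ofReal_im, neg_zero, if_neg]
    simp [Nat.even_add_one, parity_simps]

/-- Cycle constraint implies zero angle sum: if the voltages `V i` are nonzero,
`c i = V i * V (i+1) * cos (θ i)`, `s i = V i * V (i+1) * sin (θ i)` (indices cyclic),
`d i = (V i)^2`, and the cycle constraint
`∑_{A even} (−1)^(|A|/2) ∏_{h∈A} s h ∏_{h∉A} c h = ∏ i, d i` holds, then
`∑ i, θ i ≡ 0 (mod 2π)`. -/
theorem cycle_constraint_imp_angle_sum_zero (n : ℕ) [NeZero n] (hn : 1 ≤ n)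
    (θ V c s d : Fin n → ℝ) (hV : ∀ i, V i ≠ 0)
    (hc : ∀ i, c i = V i * V (i + 1) * Real.cos (θ i))
    (hs : ∀ i, s i = V i * V (i + 1) * Real.sin (θ i))
    (hd : ∀ i, d i = (V i) ^ 2)
    (hcycle : ∑ A ∈ (Finset.univ : Finset (Fin n)).powerset.filter (fun A => Even A.card),
        (-1 : ℝ) ^ (A.card / 2) * (∏ h ∈ A, s h) * ∏ h ∈ Finset.univ \ A, c h =
        ∏ i, d i) :
    ∃ m : ℤ, ∑ i, θ i = 2 * Real.pi * m := by
  set x := ∑ i, θ i with hx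
  -- product of voltages squared
  set P : ℝ := ∏ i, (V i) ^ 2 with hP
  have hPne : P ≠ 0 := Finset.prod_ne_zero_iff.2 fun i _ => pow_ne_zero 2 (hV i)
  -- the complex product
  have key : ∏ i, (Complex.I * (s i : ℂ) + (c i : ℂ)) =
      (P : ℂ) * Complex.exp (x * Complex.I) := by
    have h1 : ∀ i, (Complex.I * (s i : ℂ) + (c i : ℂ)) =
        ((V i * V (i + 1) : ℝ) : ℂ) * Complex.exp ((θ i : ℂ) * Complex.I) := by
      intro i
      rw [hc, hs, Complex.exp_mul_I, ← Complex.ofReal_cos, ← Complex.ofReal_sin]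
      push_cast
      ring
    rw [Finset.prod_congr rfl fun i _ => h1 i, Finset.prod_mul_distrib,
      ← Complex.exp_sum]
    have h2 : ∑ i, (θ i : ℂ) * Complex.I = (x : ℂ) * Complex.I := by
      rw [← Finset.sum_mul, hx]
      push_cast
      ring
    have h3 : ∏ i, ((V i * V (i + 1) : ℝ) : ℂ) = (P : ℂ) := by
      rw [← Complex.ofReal_prod]
      congr 1
      rw [hP, Finset.prod_mul_distrib]
      have h4 : ∏ i, V (i + 1) = ∏ i, V i :=
        Fintype.prod_bijective (· + 1) (Equiv.addRight (1 : Fin n)).bijective _ _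
          fun i => rfl
      rw [h4, ← Finset.prod_mul_distrib]
      exact Finset.prod_congr rfl fun i _ => (sq (V i)).symm
    rw [h2, h3]
  -- real part of the product, expanded
  have expand : (∏ i, (Complex.I * (s i : ℂ) + (c i : ℂ))).re =
      ∑ A ∈ (Finset.univ : Finset (Fin n)).powerset.filter (fun A => Even A.card),
        (-1 : ℝ) ^ (A.card / 2) * (∏ h ∈ A, s h) * ∏ h ∈ Finset.univ \ A, c h := by
    rw [Finset.prod_add, Complex.re_sum, Finset.sum_filter]
    refine Finset.sum_congr rfl fun A _ => ?_
    have hterm : (∏ h ∈ A, Complex.I * (s h : ℂ)) * ∏ h ∈ Finset.univ \ A, (c h : ℂ)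
        = ((((∏ h ∈ A, s h) * ∏ h ∈ Finset.univ \ A, c h : ℝ)) : ℂ) *
          Complex.I ^ A.card := by
      rw [Finset.prod_mul_distrib, Finset.prod_const]
      push_cast
      ring
    rw [hterm, Complex.re_ofReal_mul, I_pow_re]
    split_ifs with h
    · ring
    · ring
  -- real part of the closed form
  have closed : ((P : ℂ) * Complex.exp ((x : ℂ) * Complex.I)).re = P * Real.cos x := by
    rw [Complex.re_ofReal_mul, Complex.exp_ofReal_mul_I_re]
  have hPd : ∏ i, d i = P := by
    rw [hP]; exact Finset.prod_congr rfl fun i _ => hd i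
  have hcos : P * Real.cos x = P := by
    rw [← closed, ← key, expand, hcycle, hPd]
  have hcos1 : Real.cos x = 1 := by
    have := mul_left_cancel₀ hPne (hcos.trans (mul_one P).symm)
    exact this
  rcases Real.cos_eq_one_iff x |>.1 hcos1 with ⟨m, hm⟩
  exact ⟨m, by rw [← hm]; ring⟩
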